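/- arXiv:2603.27893 — 4 statements merged into one kernel-verified Lean document; each statement's English description precedes it below -/
import Mathlib

section
/- Suppose ℓ(y,w) ≥ 0 for all y ∈ ℝⁿ, w ∈ ℝᵐ, the terminal conditions hold (𝕏_f ⊆ 𝕏, and for every y ∈ 𝕏_f there exists w ∈ 𝕌 with f(y,w) ∈ 𝕏_f and V_f(f(y,w)) ≤ V_f(y) − ℓ(y,w)). Let (v*, z*) be an optimal pair for P_N(x), let a ≥ 0 and 1 ≤ M ≤ N, and let u be an (a,M)-admissible sequence at x with trajectory x(·). Then the successor state x⁺ := f(x, u(0)) admits an N-feasible input sequence: namely, if w ∈ 𝕌 is any input certifying the terminal condition at z*(N), the sequence (u(1),…,u(M−1), v*(M),…,v*(N−1), w) is N-feasible from x⁺, with trajectory (x(1),…,x(M), z*(M+1),…,z*(N), f(z*(N), w)). In particular, if x admits an optimal pair for P_N and an (a,M)-admissible sequence, then x⁺ lies in the set 𝒳_N of states in 𝕏 from which the N-feasible set is nonempty. (One-step recursive feasibility; part of Theorem 1(a) and Theorem 2(a).) -/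
section Framework

variable {S I : Type*}

/-- The trajectory generated by dynamics `f` from initial state `x` under input sequence `v`. -/
def traj (f : S → I → S) (x : S) (v : ℕ → I) : ℕ → S
  | 0 => x
  | k + 1 => f (traj f x v k) (v k)

/-- `v` is an `N`-feasible input sequence from `x`. -/
def Feasible (f : S → I → S) (X : Set S) (U : Set I) (Xf : Set S)
    (N : ℕ) (x : S) (v : ℕ → I) : Prop :=
  (∀ i < N, traj f x v i ∈ X ∧ v i ∈ U) ∧ traj f x v N ∈ Xf

/-- The MPC cost `V_N(x, v)`. -/
noncomputable def mpcCost (f : S → I → S) (l : S → I → ℝ) (Vf : S → ℝ)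
    (N : ℕ) (x : S) (v : ℕ → I) : ℝ :=
  (∑ i ∈ Finset.range N, l (traj f x v i) (v i)) + Vf (traj f x v N)

/-- `(v, z)` is an optimal pair for the problem `P_N(x)`. -/
def OptPair (f : S → I → S) (X : Set S) (U : Set I) (Xf : Set S)
    (l : S → I → ℝ) (Vf : S → ℝ) (N : ℕ) (x : S) (v : ℕ → I) (z : ℕ → S) : Prop :=
  Feasible f X U Xf N x v ∧ (∀ i, z i = traj f x v i) ∧
    ∀ w, Feasible f X U Xf N x w → mpcCost f l Vf N x v ≤ mpcCost f l Vf N x w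

/-- `u` is an `(a, M)`-admissible input sequence at `x`, relative to the optimal pair `(v, z)`. -/
def Adm (f : S → I → S) (X : Set S) (U : Set I) (l : S → I → ℝ)
    (a : ℝ) (M : ℕ) (x : S) (v : ℕ → I) (z : ℕ → S) (u : ℕ → I) : Prop :=
  (∀ i < M, traj f x u i ∈ X ∧ u i ∈ U) ∧
  ((∑ i ∈ Finset.range M, l (traj f x u i) (u i))
      - ∑ i ∈ Finset.range M, l (z i) (v i)) ≤ a * l x (u 0) ∧
  traj f x u M = z M

/-- The safety–stability set `𝕊(x)`. -/
def S2Set (f : S → I → S) (X : Set S) (U : Set I) (l : S → I → ℝ)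
    (a : ℝ) (M : ℕ) (x : S) (v : ℕ → I) (z : ℕ → S) : Set I :=
  {w | ∃ u, Adm f X U l a M x v z u ∧ u 0 = w}

/-- The value function `V_N^*`. -/
noncomputable def VStar (f : S → I → S) (X : Set S) (U : Set I) (Xf : Set S)
    (l : S → I → ℝ) (Vf : S → ℝ) (N : ℕ) (y : S) : ℝ :=
  sInf (mpcCost f l Vf N y '' {v | Feasible f X U Xf N y v})

/-- A K-function: continuous, strictly increasing on `[0, ∞)`, vanishing at `0`. -/
def IsKFun (α : ℝ → ℝ) : Prop :=
  Continuous α ∧ StrictMonoOn α (Set.Ici 0) ∧ α 0 = 0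

end Framework

/-- The spliced input sequence `(u(1),…,u(M−1), v(M),…,v(N−1), w)` used for the
successor state. -/
def spliceNext {I : Type*} (M N : ℕ) (u v : ℕ → I) (w : I) : ℕ → I :=
  fun i => if i + 1 < M then u (i + 1) else if i + 1 < N then v (i + 1) else w

/-- One-step recursive feasibility (part of Theorem 1(a) and Theorem 2(a)). -/
theorem one_step_recursive_feasibility {n m : ℕ}
    (f : EuclideanSpace ℝ (Fin n) → EuclideanSpace ℝ (Fin m) → EuclideanSpace ℝ (Fin n))
    (X : Set (EuclideanSpace ℝ (Fin n))) (U : Set (EuclideanSpace ℝ (Fin m)))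
    (Xf : Set (EuclideanSpace ℝ (Fin n)))
    (l : EuclideanSpace ℝ (Fin n) → EuclideanSpace ℝ (Fin m) → ℝ)
    (Vf : EuclideanSpace ℝ (Fin n) → ℝ)
    (N M : ℕ) (a : ℝ) (x : EuclideanSpace ℝ (Fin n))
    (vs : ℕ → EuclideanSpace ℝ (Fin m)) (zs : ℕ → EuclideanSpace ℝ (Fin n))
    (u : ℕ → EuclideanSpace ℝ (Fin m))
    (hl : ∀ y w, 0 ≤ l y w)
    (hXfX : Xf ⊆ X)
    (hterm : ∀ y ∈ Xf, ∃ w ∈ U, f y w ∈ Xf ∧ Vf (f y w) ≤ Vf y - l y w)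
    (ha : 0 ≤ a) (hM1 : 1 ≤ M) (hMN : M ≤ N)
    (hopt : OptPair f X U Xf l Vf N x vs zs)
    (hadm : Adm f X U l a M x vs zs u) :
    (∀ w ∈ U, f (zs N) w ∈ Xf → Vf (f (zs N) w) ≤ Vf (zs N) - l (zs N) w →
      Feasible f X U Xf N (f x (u 0)) (spliceNext M N u vs w) ∧
      (∀ i, i + 1 ≤ M →
        traj f (f x (u 0)) (spliceNext M N u vs w) i = traj f x u (i + 1)) ∧
      (∀ i, M ≤ i → i + 1 ≤ N →
        traj f (f x (u 0)) (spliceNext M N u vs w) i = zs (i + 1)) ∧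
      traj f (f x (u 0)) (spliceNext M N u vs w) N = f (zs N) w) ∧
    (f x (u 0) ∈ X ∧ ∃ v', Feasible f X U Xf N (f x (u 0)) v') := by
  obtain ⟨⟨hvfeas, hvterm⟩, hz, -⟩ := hopt
  obtain ⟨hufeas, -, huM⟩ := hadm
  have hzN : zs N ∈ Xf := by rw [hz]; exact hvterm
  have key : ∀ w ∈ U, f (zs N) w ∈ Xf →
      Feasible f X U Xf N (f x (u 0)) (spliceNext M N u vs w) ∧
      (∀ i, i + 1 ≤ M →
        traj f (f x (u 0)) (spliceNext M N u vs w) i = traj f x u (i + 1)) ∧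
      (∀ i, M ≤ i → i + 1 ≤ N →
        traj f (f x (u 0)) (spliceNext M N u vs w) i = zs (i + 1)) ∧
      traj f (f x (u 0)) (spliceNext M N u vs w) N = f (zs N) w := by
    intro w hwU hwXf
    set sp := spliceNext M N u vs w with hsp
    have hsp1 : ∀ i, i + 1 < M → sp i = u (i + 1) := fun i h => by
      simp [hsp, spliceNext, h]
    have hsp2 : ∀ i, ¬ i + 1 < M → i + 1 < N → sp i = vs (i + 1) := fun i h h' => by
      simp [hsp, spliceNext, h, h']
    have hsp3 : ∀ i, ¬ i + 1 < N → sp i = w := fun i h => by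
      have h0 : ¬ i + 1 < M := fun hh => h (lt_of_lt_of_le hh hMN)
      simp [hsp, spliceNext, h0, h]
    have h1 : ∀ i, i + 1 ≤ M → traj f (f x (u 0)) sp i = traj f x u (i + 1) := by
      intro i
      induction i with
      | zero => intro _; simp [traj]
      | succ k ih =>
        intro hk
        simp only [traj]
        rw [ih (by omega), hsp1 k (by omega)]
        rfl
    have h2 : ∀ i, M ≤ i → i + 1 ≤ N → traj f (f x (u 0)) sp i = zs (i + 1) := by
      intro i hMi
      induction i, hMi using Nat.le_induction with
      | base =>
        intro hMN'
        obtain ⟨M', rfl⟩ : ∃ M', M = M' + 1 := ⟨M - 1, by omega⟩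
        simp only [traj]
        rw [h1 M' le_rfl, huM, hsp2 M' (by omega) (by omega), hz (M' + 1),
          hz (M' + 1 + 1)]
        rfl
      | succ k hk ih =>
        intro hN
        simp only [traj]
        rw [ih (by omega), hsp2 k (by omega) (by omega), hz (k + 1), hz (k + 1 + 1)]
        rfl
    have h3 : traj f (f x (u 0)) sp N = f (zs N) w := by
      obtain ⟨N', rfl⟩ : ∃ N', N = N' + 1 := ⟨N - 1, by omega⟩
      simp only [traj]
      rw [hsp3 N' (by omega)]
      rcases le_or_gt (N' + 1) M with hc | hc
      · have hMeq : M = N' + 1 := by omega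
        rw [h1 N' (by omega), ← hMeq, huM]
      · rw [h2 N' (by omega) le_rfl]
    have hfeas : Feasible f X U Xf N (f x (u 0)) sp := by
      refine ⟨?_, by rw [h3]; exact hwXf⟩
      intro i hi
      rcases lt_trichotomy (i + 1) M with h | h | h
      · exact ⟨by rw [h1 i (by omega)]; exact (hufeas (i + 1) h).1,
          by rw [hsp1 i h]; exact (hufeas (i + 1) h).2⟩
      · have hx : traj f (f x (u 0)) sp i = traj f x vs M := by
          rw [h1 i (by omega), h, huM, hz]
        rcases eq_or_lt_of_le hMN with hMN' | hMN'
        · refine ⟨by rw [hx, hMN']; exact hXfX hvterm, ?_⟩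
          rw [hsp3 i (by omega)]; exact hwU
        · refine ⟨by rw [hx]; exact (hvfeas M hMN').1, ?_⟩
          rw [hsp2 i (by omega) (by omega), h]; exact (hvfeas M hMN').2
      · have hx : traj f (f x (u 0)) sp i = traj f x vs (i + 1) := by
          rw [h2 i (by omega) (by omega), hz]
        rcases eq_or_lt_of_le (show i + 1 ≤ N by omega) with hiN | hiN
        · refine ⟨by rw [hx, hiN]; exact hXfX hvterm, ?_⟩
          rw [hsp3 i (by omega)]; exact hwU
        · exact ⟨by rw [hx]; exact (hvfeas (i + 1) hiN).1,
            by rw [hsp2 i (by omega) hiN]; exact (hvfeas (i + 1) hiN).2⟩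
    exact ⟨hfeas, h1, h2, h3⟩
  refine ⟨fun w hwU hwXf _ => key w hwU hwXf, ?_⟩
  obtain ⟨w, hwU, hwXf, -⟩ := hterm (zs N) hzN
  obtain ⟨hfeas, -, -, -⟩ := key w hwU hwXf
  refine ⟨?_, spliceNext M N u vs w, hfeas⟩
  have h0 := (hfeas.1 0 (by omega)).1
  simpa [traj] using h0
end

section
/- Suppose ℓ ≥ 0 and V_f ≥ 0 everywhere, and the terminal conditions hold (𝕏_f ⊆ 𝕏, and for every y ∈ 𝕏_f there exists w ∈ 𝕌 with f(y,w) ∈ 𝕏_f and V_f(f(y,w)) ≤ V_f(y) − ℓ(y,w)). Let (v*, z*) be an optimal pair for P_N(x), let a ≥ 0 and 1 ≤ M ≤ N, and let u be an (a,M)-admissible sequence at x. Then the value function satisfies the decrease inequality V_N*(f(x, u(0))) ≤ V_N*(x) − (1 − a)·ℓ(x, u(0)). (One-step Lyapunov decrease; the key inequality in the proofs of Theorem 1(b) and Theorem 2(b).) -/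
/-- One-step Lyapunov decrease of the value function
(key inequality in Theorem 1(b) and Theorem 2(b)). -/
theorem value_function_one_step_decrease {n m : ℕ}
    (f : EuclideanSpace ℝ (Fin n) → EuclideanSpace ℝ (Fin m) → EuclideanSpace ℝ (Fin n))
    (X : Set (EuclideanSpace ℝ (Fin n))) (U : Set (EuclideanSpace ℝ (Fin m)))
    (Xf : Set (EuclideanSpace ℝ (Fin n)))
    (l : EuclideanSpace ℝ (Fin n) → EuclideanSpace ℝ (Fin m) → ℝ)
    (Vf : EuclideanSpace ℝ (Fin n) → ℝ)
    (N M : ℕ) (a : ℝ) (x : EuclideanSpace ℝ (Fin n))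
    (vs : ℕ → EuclideanSpace ℝ (Fin m)) (zs : ℕ → EuclideanSpace ℝ (Fin n))
    (u : ℕ → EuclideanSpace ℝ (Fin m))
    (hl : ∀ y w, 0 ≤ l y w)
    (hVf : ∀ y, 0 ≤ Vf y)
    (hXfX : Xf ⊆ X)
    (hterm : ∀ y ∈ Xf, ∃ w ∈ U, f y w ∈ Xf ∧ Vf (f y w) ≤ Vf y - l y w)
    (ha : 0 ≤ a) (hM1 : 1 ≤ M) (hMN : M ≤ N)
    (hopt : OptPair f X U Xf l Vf N x vs zs)
    (hadm : Adm f X U l a M x vs zs u) :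
    VStar f X U Xf l Vf N (f x (u 0)) ≤ VStar f X U Xf l Vf N x - (1 - a) * l x (u 0) := by
    classical
  obtain ⟨hfeas, hz, hoptmin⟩ := hopt
  obtain ⟨huXU, hucost, huend⟩ := hadm
  obtain ⟨K, rfl⟩ : ∃ K, N = K + 1 := ⟨N - 1, by omega⟩
  set zN := traj f x vs (K + 1) with hzN
  have hzNXf : zN ∈ Xf := hfeas.2
  obtain ⟨wt, hwtU, hwtXf, hwtV⟩ := hterm zN hzNXf
  set x' := f x (u 0) with hx'
  set w : ℕ → EuclideanSpace ℝ (Fin m) :=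
    fun i => if i + 1 < M then u (i + 1) else if i + 1 < K + 1 then vs (i + 1) else wt with hw
  have h1 : ∀ i, i + 1 ≤ M → traj f x' w i = traj f x u (i + 1) := by
    intro i
    induction i with
    | zero => intro _; rfl
    | succ k ih =>
      intro hk
      have hk' : k + 1 < M := hk
      show f (traj f x' w k) (w k) = f (traj f x u (k + 1)) (u (k + 1))
      rw [ih (le_of_lt hk')]
      simp only [hw, if_pos hk']
  have huM : traj f x u M = traj f x vs M := by rw [huend, hz]
  have h2 : ∀ i, M ≤ i + 1 → i + 1 ≤ K + 1 → traj f x' w i = traj f x vs (i + 1) := by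
    intro i
    induction i with
    | zero =>
      intro hMle _
      have hMeq : M = 1 := le_antisymm hMle hM1
      have e1 : traj f x' w 0 = traj f x u 1 := rfl
      rw [e1, show (1 : ℕ) = M by omega, huM, hMeq]
    | succ k ih =>
      intro hMle hNle
      show f (traj f x' w k) (w k) = traj f x vs (k + 1 + 1)
      by_cases hk : M ≤ k + 1
      · rw [ih hk (by omega)]
        simp only [hw, if_neg (by omega : ¬ (k + 1 < M)), if_pos (by omega : k + 1 < K + 1)]
        rfl
      · have hMk : M = k + 2 := by omega
        rw [h1 k (by omega)]
        simp only [hw, if_pos (by omega : k + 1 < M)]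
        have e2 : f (traj f x u (k + 1)) (u (k + 1)) = traj f x u (k + 2) := rfl
        rw [e2, show k + 2 = M by omega, huM, hMk]
  have hwfeas : Feasible f X U Xf (K + 1) x' w := by
    constructor
    · intro i hi
      by_cases h1i : i + 1 < M
      · rw [h1 i (le_of_lt h1i)]
        refine ⟨(huXU (i + 1) h1i).1, ?_⟩
        simp only [hw, if_pos h1i]
        exact (huXU (i + 1) h1i).2
      · by_cases h2i : i + 1 < K + 1
        · rw [h2 i (by omega) (le_of_lt h2i)]
          refine ⟨(hfeas.1 (i + 1) h2i).1, ?_⟩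
          simp only [hw, if_neg h1i, if_pos h2i]
          exact (hfeas.1 (i + 1) h2i).2
        · have hiN : i + 1 = K + 1 := by omega
          constructor
          · rw [h2 i (by omega) (by omega), hiN]
            exact hXfX hzNXf
          · simp only [hw, if_neg h1i, if_neg h2i]
            exact hwtU
    · show f (traj f x' w K) (w K) ∈ Xf
      rw [h2 K (by omega) (by omega)]
      simp only [hw, if_neg (by omega : ¬ (K + 1 < M)), if_neg (by omega : ¬ (K + 1 < K + 1))]
      exact hwtXf
  -- the auxiliary stage-cost function
  set G : ℕ → ℝ := fun j =>
    if j < M then l (traj f x u j) (u j) else l (traj f x vs j) (vs j) with hG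
  have hstage : ∀ i < K, l (traj f x' w i) (w i) = G (i + 1) := by
    intro i hi
    by_cases h1i : i + 1 < M
    · rw [h1 i (le_of_lt h1i)]
      simp only [hw, hG, if_pos h1i]
    · rw [h2 i (by omega) (by omega)]
      simp only [hw, hG, if_neg h1i, if_pos (by omega : i + 1 < K + 1)]
  have hlast : l (traj f x' w K) (w K) = l zN wt := by
    rw [h2 K (by omega) (by omega)]
    simp only [hw, if_neg (by omega : ¬ (K + 1 < M)), if_neg (by omega : ¬ (K + 1 < K + 1))]
    rfl
  have hVflast : Vf (traj f x' w (K + 1)) = Vf (f zN wt) := by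
    show Vf (f (traj f x' w K) (w K)) = _
    rw [h2 K (by omega) (by omega)]
    simp only [hw, if_neg (by omega : ¬ (K + 1 < M)), if_neg (by omega : ¬ (K + 1 < K + 1))]
    rfl
  -- sum manipulations
  have hsum1 : (∑ i ∈ Finset.range (K + 1), l (traj f x' w i) (w i))
      = (∑ i ∈ Finset.range K, G (i + 1)) + l zN wt := by
    rw [Finset.sum_range_succ, hlast]
    congr 1
    exact Finset.sum_congr rfl fun i hi => hstage i (Finset.mem_range.mp hi)
  have hsum2 : (∑ i ∈ Finset.range K, G (i + 1))
      = (∑ i ∈ Finset.range (K + 1), G i) - G 0 := by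
    rw [Finset.sum_range_succ']
    ring
  have hG0 : G 0 = l x (u 0) := by
    simp only [hG, if_pos (by omega : 0 < M)]
    rfl
  have hsplitG : (∑ i ∈ Finset.range (K + 1), G i)
      = (∑ i ∈ Finset.range M, G i) + ∑ i ∈ Finset.Ico M (K + 1), G i := by
    rw [Finset.range_eq_Ico, ← Finset.sum_Ico_consecutive G (Nat.zero_le M) (by omega : M ≤ K + 1), Finset.range_eq_Ico]
  have hGlow : ∀ i ∈ Finset.range M, G i = l (traj f x u i) (u i) := by
    intro i hi
    simp only [hG, if_pos (Finset.mem_range.mp hi)]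
  have hGhigh : ∀ i ∈ Finset.Ico M (K + 1), G i = l (traj f x vs i) (vs i) := by
    intro i hi
    have hiM := (Finset.mem_Ico.mp hi).1
    simp only [hG, if_neg (by omega : ¬ i < M)]
  have hucost' : (∑ i ∈ Finset.range M, l (traj f x u i) (u i))
      ≤ (∑ i ∈ Finset.range M, l (traj f x vs i) (vs i)) + a * l x (u 0) := by
    have hzz : (∑ i ∈ Finset.range M, l (zs i) (vs i))
        = ∑ i ∈ Finset.range M, l (traj f x vs i) (vs i) :=
      Finset.sum_congr rfl fun i _ => by rw [hz]
    rw [← hzz]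
    linarith [hucost]
  have hsplitA : (∑ i ∈ Finset.range (K + 1), l (traj f x vs i) (vs i))
      = (∑ i ∈ Finset.range M, l (traj f x vs i) (vs i))
        + ∑ i ∈ Finset.Ico M (K + 1), l (traj f x vs i) (vs i) := by
    rw [Finset.range_eq_Ico, ← Finset.sum_Ico_consecutive _ (Nat.zero_le M)
      (by omega : M ≤ K + 1), Finset.range_eq_Ico]
  have hGineq : (∑ i ∈ Finset.range (K + 1), G i)
      ≤ (∑ i ∈ Finset.range (K + 1), l (traj f x vs i) (vs i)) + a * l x (u 0) := by
    rw [hsplitG, hsplitA, Finset.sum_congr rfl hGlow, Finset.sum_congr rfl hGhigh]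
    linarith [hucost']
  have hkey : mpcCost f l Vf (K + 1) x' w
      ≤ mpcCost f l Vf (K + 1) x vs - (1 - a) * l x (u 0) := by
    have e1 : mpcCost f l Vf (K + 1) x' w
        = (∑ i ∈ Finset.range (K + 1), l (traj f x' w i) (w i))
          + Vf (traj f x' w (K + 1)) := rfl
    have e2 : mpcCost f l Vf (K + 1) x vs
        = (∑ i ∈ Finset.range (K + 1), l (traj f x vs i) (vs i)) + Vf zN := rfl
    rw [e1, e2, hsum1, hsum2, hG0, hVflast]
    linarith [hGineq, hwtV]
  have hnn : ∀ (y : EuclideanSpace ℝ (Fin n)) (v : ℕ → EuclideanSpace ℝ (Fin m)),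
      0 ≤ mpcCost f l Vf (K + 1) y v := fun y v =>
    add_nonneg (Finset.sum_nonneg fun i _ => hl _ _) (hVf _)
  have hV1 : VStar f X U Xf l Vf (K + 1) x' ≤ mpcCost f l Vf (K + 1) x' w :=
    csInf_le ⟨0, fun b hb => by obtain ⟨v', _, rfl⟩ := hb; exact hnn _ _⟩ ⟨w, hwfeas, rfl⟩
  have hV2 : VStar f X U Xf l Vf (K + 1) x = mpcCost f l Vf (K + 1) x vs := by
    apply le_antisymm
    · exact csInf_le ⟨0, fun b hb => by obtain ⟨v', _, rfl⟩ := hb; exact hnn _ _⟩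
        ⟨vs, hfeas, rfl⟩
    · refine le_csInf ⟨_, ⟨vs, hfeas, rfl⟩⟩ ?_
      rintro b ⟨v', hv', rfl⟩
      exact hoptmin v' hv'
  rw [hV2]
  linarith [hV1, hkey]
end

section
/- (Theorem 1, closed loop.) Suppose ℓ ≥ 0 and V_f ≥ 0 everywhere, the terminal conditions hold (𝕏_f ⊆ 𝕏, and for every y ∈ 𝕏_f there exists w ∈ 𝕌 with f(y,w) ∈ 𝕏_f and V_f(f(y,w)) ≤ V_f(y) − ℓ(y,w)), 0 ≤ a < 1, 1 ≤ M ≤ N, and there is a K-function α₁ such that ℓ(y,w) ≥ α₁(‖y‖) for all y ∈ 𝕏 and w ∈ 𝕌. Let x : ℕ → ℝⁿ be a closed-loop trajectory: for each k there is an optimal pair (v*_k, z*_k) for P_N(x(k)) and an input sequence u_k that is (a,M)-admissible at x(k) relative to (v*_k, z*_k), with x(k+1) = f(x(k), u_k(0)). Then: (i) x(k) ∈ 𝕏 and u_k(0) ∈ 𝕌 for all k ∈ ℕ; (ii) the sequence k ↦ V_N*(x(k)) is nonincreasing and satisfies V_N*(x(k+1)) ≤ V_N*(x(k)) − (1−a)·α₁(‖x(k)‖);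 and (iii) x(k) → 0 as k → ∞. -/
section Aux

variable {S I : Type*} (f : S → I → S) (X : Set S) (U : Set I) (Xf : Set S)
  (l : S → I → ℝ) (Vf : S → ℝ)

lemma mpcCost_nonneg (hl : ∀ y w, 0 ≤ l y w) (hVf : ∀ y, 0 ≤ Vf y)
    (N : ℕ) (y : S) (v : ℕ → I) : 0 ≤ mpcCost f l Vf N y v := by
  unfold mpcCost
  have h1 : (0:ℝ) ≤ ∑ i ∈ Finset.range N, l (traj f y v i) (v i) :=
    Finset.sum_nonneg fun i _ => hl _ _
  linarith [hVf (traj f y v N)]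

lemma VStar_bdd (hl : ∀ y w, 0 ≤ l y w) (hVf : ∀ y, 0 ≤ Vf y) (N : ℕ) (y : S) :
    BddBelow (mpcCost f l Vf N y '' {v | Feasible f X U Xf N y v}) := by
  refine ⟨0, fun c hc => ?_⟩
  obtain ⟨v, -, rfl⟩ := hc
  exact mpcCost_nonneg f l Vf hl hVf N y v

lemma VStar_le_of_feasible (hl : ∀ y w, 0 ≤ l y w) (hVf : ∀ y, 0 ≤ Vf y)
    {N : ℕ} {y : S} {w : ℕ → I} (hw : Feasible f X U Xf N y w) :
    VStar f X U Xf l Vf N y ≤ mpcCost f l Vf N y w :=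
  csInf_le (VStar_bdd f X U Xf l Vf hl hVf N y) ⟨w, hw, rfl⟩

lemma VStar_nonneg (hl : ∀ y w, 0 ≤ l y w) (hVf : ∀ y, 0 ≤ Vf y)
    {N : ℕ} {y : S} {w : ℕ → I} (hw : Feasible f X U Xf N y w) :
    0 ≤ VStar f X U Xf l Vf N y :=
  le_csInf ⟨_, ⟨w, hw, rfl⟩⟩ (by rintro c ⟨v, -, rfl⟩; exact mpcCost_nonneg f l Vf hl hVf N y v)

lemma VStar_opt (hl : ∀ y w, 0 ≤ l y w) (hVf : ∀ y, 0 ≤ Vf y)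
    {N : ℕ} {y : S} {v : ℕ → I} {z : ℕ → S}
    (hv : OptPair f X U Xf l Vf N y v z) :
    VStar f X U Xf l Vf N y = mpcCost f l Vf N y v := by
  refine le_antisymm (VStar_le_of_feasible f X U Xf l Vf hl hVf hv.1) ?_
  exact le_csInf ⟨_, ⟨v, hv.1, rfl⟩⟩ (by rintro c ⟨w, hw, rfl⟩; exact hv.2.2 w hw)

lemma step_dec
    (hl : ∀ y w, 0 ≤ l y w) (hVf : ∀ y, 0 ≤ Vf y) (hXfX : Xf ⊆ X)
    (hterm : ∀ y ∈ Xf, ∃ w ∈ U, f y w ∈ Xf ∧ Vf (f y w) ≤ Vf y - l y w)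
    {N M : ℕ} {a : ℝ} (hM1 : 1 ≤ M) (hMN : M ≤ N)
    (x0 : S) (v : ℕ → I) (z : ℕ → S) (uk : ℕ → I)
    (hopt : OptPair f X U Xf l Vf N x0 v z)
    (hadm : Adm f X U l a M x0 v z uk) :
    VStar f X U Xf l Vf N (f x0 (uk 0)) ≤ VStar f X U Xf l Vf N x0 + (a - 1) * l x0 (uk 0) := by
  obtain ⟨M', rfl⟩ : ∃ M', M = M' + 1 := ⟨M - 1, by omega⟩
  obtain ⟨N', rfl⟩ : ∃ N', N = N' + 1 := ⟨N - 1, by omega⟩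
  have hMN' : M' ≤ N' := by omega
  have hz : ∀ i, z i = traj f x0 v i := hopt.2.1
  have hfeas := hopt.1
  have hzN : traj f x0 v (N' + 1) ∈ Xf := hfeas.2
  obtain ⟨κ, hκU, hκXf, hκV⟩ := hterm _ hzN
  set x1 := f x0 (uk 0) with hx1
  set w : ℕ → I := fun i => if i < M' then uk (i + 1) else if i < N' then v (i + 1) else κ
    with hw
  set ct := traj f x1 w with hct
  -- Lemma 1
  have L1 : ∀ i, i ≤ M' → ct i = traj f x0 uk (i + 1) := by
    intro i hi
    induction i with
    | zero => simp [hct, traj, hx1]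
    | succ j ih =>
      have hj : j ≤ M' := by omega
      have hwj : w j = uk (j + 1) := by simp [hw, show j < M' by omega]
      show f (ct j) (w j) = f (traj f x0 uk (j + 1)) (uk (j + 1))
      rw [ih hj, hwj]
  -- Lemma 2
  have L2 : ∀ d, M' + 1 + d ≤ N' + 1 → ct (M' + d) = traj f x0 v (M' + 1 + d) := by
    intro d hd
    induction d with
    | zero =>
      have := L1 M' le_rfl
      simp only [Nat.add_zero]
      rw [this]
      have := hadm.2.2
      rw [hz] at this
      exact this
    | succ e ih =>
      have he : M' + 1 + e ≤ N' + 1 := by omega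
      have hwe : w (M' + e) = v (M' + 1 + e) := by
        have h1 : ¬ (M' + e < M') := by omega
        have h2 : M' + e < N' := by omega
        simp [hw, h1, h2, show M' + e + 1 = M' + 1 + e by omega]
      show f (ct (M' + e)) (w (M' + e)) = traj f x0 v (M' + 1 + e + 1)
      rw [ih he, hwe]
      rfl
  have hctN' : ct N' = traj f x0 v (N' + 1) := by
    have := L2 (N' - M') (by omega)
    rwa [show M' + (N' - M') = N' by omega, show M' + 1 + (N' - M') = N' + 1 by omega] at this
  have hwN' : w N' = κ := by simp [hw, show ¬ (N' < M') by omega]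
  have hctN1 : ct (N' + 1) = f (traj f x0 v (N' + 1)) κ := by
    show f (ct N') (w N') = _
    rw [hctN', hwN']
  -- feasibility of candidate
  have hfw : Feasible f X U Xf (N' + 1) x1 w := by
    refine ⟨fun i hi => ⟨?_, ?_⟩, ?_⟩
    · show ct i ∈ X
      by_cases hiM : i < M'
      · rw [L1 i (by omega)]
        exact (hadm.1 (i + 1) (by omega)).1
      · obtain ⟨d, hd⟩ : ∃ d, i = M' + d := ⟨i - M', by omega⟩
        subst hd
        rw [L2 d (by omega)]
        by_cases hN : M' + 1 + d < N' + 1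
        · exact (hfeas.1 _ hN).1
        · have : M' + 1 + d = N' + 1 := by omega
          rw [this]; exact hXfX hzN
    · by_cases h1 : i < M'
      · simp only [hw, if_pos h1]
        exact (hadm.1 (i + 1) (by omega)).2
      · by_cases h2 : i < N'
        · simp only [hw, if_neg h1, if_pos h2]
          exact (hfeas.1 (i + 1) (by omega)).2
        · simp only [hw, if_neg h1, if_neg h2]
          exact hκU
    · show ct (N' + 1) ∈ Xf
      rw [hctN1]; exact hκXf
  -- cost of candidate
  set F : ℕ → ℝ := fun j => if j < M' + 1 then l (traj f x0 uk j) (uk j)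
      else l (traj f x0 v j) (v j) with hF
  have hterms : ∀ i < N', l (ct i) (w i) = F (i + 1) := by
    intro i hi
    by_cases hiM : i < M'
    · rw [L1 i (by omega)]
      simp [hF, hw, hiM, show i + 1 < M' + 1 by omega]
    · obtain ⟨d, hd⟩ : ∃ d, i = M' + d := ⟨i - M', by omega⟩
      subst hd
      rw [L2 d (by omega)]
      have h2 : M' + d < N' := hi
      simp only [hw, hF, if_neg hiM, if_pos h2,
        show M' + d + 1 = M' + 1 + d by omega]
      rw [if_neg (show ¬ (M' + 1 + d < M' + 1) by omega)]
  have hsum1 : ∑ i ∈ Finset.range (N' + 1), l (ct i) (w i)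
      = (∑ i ∈ Finset.range N', F (i + 1)) + l (traj f x0 v (N' + 1)) κ := by
    rw [Finset.sum_range_succ, hctN', hwN']
    congr 1
    exact Finset.sum_congr rfl fun i hi => hterms i (Finset.mem_range.mp hi)
  have hsum2 : ∑ i ∈ Finset.range N', F (i + 1)
      = (∑ i ∈ Finset.range (N' + 1), F i) - F 0 := by
    rw [Finset.sum_range_succ' F N']; ring
  have hF0 : F 0 = l x0 (uk 0) := by simp [hF, traj]
  have hsplit : ∑ i ∈ Finset.range (N' + 1), F i
      = (∑ i ∈ Finset.range (M' + 1), l (traj f x0 uk i) (uk i))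
        + ∑ i ∈ Finset.Ico (M' + 1) (N' + 1), l (traj f x0 v i) (v i) := by
    rw [Finset.range_eq_Ico, ← Finset.sum_Ico_consecutive F (Nat.zero_le (M' + 1)) (by omega),
      ← Finset.range_eq_Ico]
    congr 1
    · exact Finset.sum_congr rfl fun i hi => by
        simp [hF, Finset.mem_range.mp hi, show ¬ M' < i by have := Finset.mem_range.mp hi; omega]
    · refine Finset.sum_congr rfl fun i hi => ?_
      have := (Finset.mem_Ico.mp hi).1
      simp [hF, show ¬ (i < M' + 1) by omega, show ¬ i ≤ M' by omega]
  have hvsplit : ∑ i ∈ Finset.range (N' + 1), l (traj f x0 v i) (v i)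
      = (∑ i ∈ Finset.range (M' + 1), l (traj f x0 v i) (v i))
        + ∑ i ∈ Finset.Ico (M' + 1) (N' + 1), l (traj f x0 v i) (v i) := by
    rw [Finset.range_eq_Ico,
      ← Finset.sum_Ico_consecutive _ (Nat.zero_le (M' + 1)) (show M' + 1 ≤ N' + 1 by omega),
      ← Finset.range_eq_Ico]
  have hadm2 : (∑ i ∈ Finset.range (M' + 1), l (traj f x0 uk i) (uk i))
      - ∑ i ∈ Finset.range (M' + 1), l (traj f x0 v i) (v i) ≤ a * l x0 (uk 0) := by
    have := hadm.2.1
    simpa only [hz] using this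
  have hcostw : mpcCost f l Vf (N' + 1) x1 w
      ≤ mpcCost f l Vf (N' + 1) x0 v + (a - 1) * l x0 (uk 0) := by
    unfold mpcCost
    simp only [← hct]
    rw [hsum1, hsum2, hF0, hsplit, hvsplit]
    have h1 : Vf (ct (N' + 1)) = Vf (f (traj f x0 v (N' + 1)) κ) := by rw [hctN1]
    rw [h1]
    linarith [hκV]
  calc VStar f X U Xf l Vf (N' + 1) x1
      ≤ mpcCost f l Vf (N' + 1) x1 w := VStar_le_of_feasible f X U Xf l Vf hl hVf hfw
    _ ≤ mpcCost f l Vf (N' + 1) x0 v + (a - 1) * l x0 (uk 0) := hcostw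
    _ = VStar f X U Xf l Vf (N' + 1) x0 + (a - 1) * l x0 (uk 0) := by
        rw [VStar_opt f X U Xf l Vf hl hVf hopt]

end Aux

/-- Theorem 1 (closed loop): safety, Lyapunov decrease of the value function, and
convergence of the state to the origin. -/
theorem closed_loop_safety_and_stability {n m : ℕ}
    (f : EuclideanSpace ℝ (Fin n) → EuclideanSpace ℝ (Fin m) → EuclideanSpace ℝ (Fin n))
    (X : Set (EuclideanSpace ℝ (Fin n))) (U : Set (EuclideanSpace ℝ (Fin m)))
    (Xf : Set (EuclideanSpace ℝ (Fin n)))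
    (l : EuclideanSpace ℝ (Fin n) → EuclideanSpace ℝ (Fin m) → ℝ)
    (Vf : EuclideanSpace ℝ (Fin n) → ℝ)
    (N M : ℕ) (a : ℝ) (α₁ : ℝ → ℝ)
    (hl : ∀ y w, 0 ≤ l y w)
    (hVf : ∀ y, 0 ≤ Vf y)
    (hXfX : Xf ⊆ X)
    (hterm : ∀ y ∈ Xf, ∃ w ∈ U, f y w ∈ Xf ∧ Vf (f y w) ≤ Vf y - l y w)
    (ha0 : 0 ≤ a) (ha1 : a < 1) (hM1 : 1 ≤ M) (hMN : M ≤ N)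
    (hα : IsKFun α₁)
    (hαl : ∀ y ∈ X, ∀ w ∈ U, α₁ ‖y‖ ≤ l y w)
    (x : ℕ → EuclideanSpace ℝ (Fin n))
    (u : ℕ → ℕ → EuclideanSpace ℝ (Fin m))
    (vs : ℕ → ℕ → EuclideanSpace ℝ (Fin m))
    (zs : ℕ → ℕ → EuclideanSpace ℝ (Fin n))
    (hloop : ∀ k, OptPair f X U Xf l Vf N (x k) (vs k) (zs k) ∧
      Adm f X U l a M (x k) (vs k) (zs k) (u k) ∧ x (k + 1) = f (x k) (u k 0)) :
    (∀ k, x k ∈ X ∧ u k 0 ∈ U) ∧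
    (∀ k, VStar f X U Xf l Vf N (x (k + 1)) ≤ VStar f X U Xf l Vf N (x k)) ∧
    (∀ k, VStar f X U Xf l Vf N (x (k + 1))
        ≤ VStar f X U Xf l Vf N (x k) - (1 - a) * α₁ ‖x k‖) ∧
    Filter.Tendsto x Filter.atTop (nhds 0) := by
  have h1a : (0:ℝ) < 1 - a := by linarith
  have hsafe : ∀ k, x k ∈ X ∧ u k 0 ∈ U := by
    intro k
    have h := (hloop k).2.1.1 0 (by omega)
    exact ⟨h.1, h.2⟩
  have hα0 : ∀ r : ℝ, 0 ≤ r → 0 ≤ α₁ r := by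
    intro r hr
    rw [← hα.2.2]
    exact hα.2.1.monotoneOn (Set.mem_Ici.mpr le_rfl) (Set.mem_Ici.mpr hr) hr
  have hdec : ∀ k, VStar f X U Xf l Vf N (x (k + 1))
      ≤ VStar f X U Xf l Vf N (x k) - (1 - a) * α₁ ‖x k‖ := by
    intro k
    obtain ⟨hopt, hadm, hx⟩ := hloop k
    have h1 := step_dec f X U Xf l Vf hl hVf hXfX hterm hM1 hMN
      (x k) (vs k) (zs k) (u k) hopt hadm
    rw [← hx] at h1
    have h2 : α₁ ‖x k‖ ≤ l (x k) (u k 0) := hαl _ (hsafe k).1 _ (hsafe k).2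
    have h3 : (a - 1) * l (x k) (u k 0) ≤ (a - 1) * α₁ ‖x k‖ :=
      mul_le_mul_of_nonpos_left h2 (by linarith)
    linarith
  have hmono : ∀ k, VStar f X U Xf l Vf N (x (k + 1)) ≤ VStar f X U Xf l Vf N (x k) := by
    intro k
    have h := hdec k
    have := mul_nonneg h1a.le (hα0 _ (norm_nonneg (x k)))
    linarith
  refine ⟨hsafe, hmono, hdec, ?_⟩
  set b : ℕ → ℝ := fun k => VStar f X U Xf l Vf N (x k) with hb
  have hbanti : Antitone b := antitone_nat_of_succ_le hmono
  have hb0 : ∀ k, 0 ≤ b k := fun k =>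
    VStar_nonneg f X U Xf l Vf hl hVf (hloop k).1.1
  have hbdd : BddBelow (Set.range b) := ⟨0, by rintro _ ⟨k, rfl⟩; exact hb0 k⟩
  have hbl : Filter.Tendsto b Filter.atTop (nhds (⨅ k, b k)) :=
    tendsto_atTop_ciInf hbanti hbdd
  have hbl' : Filter.Tendsto (fun k => b (k + 1)) Filter.atTop (nhds (⨅ k, b k)) :=
    hbl.comp (Filter.tendsto_add_atTop_nat 1)
  have hdiff : Filter.Tendsto (fun k => (b k - b (k + 1)) / (1 - a))
      Filter.atTop (nhds 0) := by
    have := (hbl.sub hbl').div_const (1 - a)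
    simpa using this
  have hαt : Filter.Tendsto (fun k => α₁ ‖x k‖) Filter.atTop (nhds 0) := by
    refine squeeze_zero (fun k => hα0 _ (norm_nonneg _)) (fun k => ?_) hdiff
    rw [le_div_iff₀ h1a]
    have := hdec k
    nlinarith [hdec k]
  rw [NormedAddCommGroup.tendsto_nhds_zero]
  intro ε hε
  have hαε : 0 < α₁ ε := by
    have h := hα.2.1 (Set.mem_Ici.mpr le_rfl) (Set.mem_Ici.mpr hε.le) hε
    rwa [hα.2.2] at h
  filter_upwards [hαt.eventually (gt_mem_nhds hαε)] with k hk
  by_contra h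
  push_neg at h
  have := hα.2.1.monotoneOn (Set.mem_Ici.mpr hε.le) (Set.mem_Ici.mpr (norm_nonneg _)) h
  linarith
end

section
/- (Proposition 3(b).) Let (v*, z*) be an optimal pair for P_N(x) with 1 ≤ M ≤ N, and suppose v* is the UNIQUE input sequence that is N-feasible from x and minimizes V_N(x, ·) over all N-feasible sequences (as guaranteed when the optimization problem P_N(x) is strictly convex). Then, for the parameter value a = 0, the safety–stability set degenerates to the singleton 𝕊(x) = { v*(0) }; in particular every (0,M)-admissible sequence u at x has u(0) = v*(0). -/
lemma traj_congr {S I : Type*} (f : S → I → S) (x : S) (u v : ℕ → I) :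
    ∀ k, (∀ i < k, u i = v i) → traj f x u k = traj f x v k := by
  intro k
  induction k with
  | zero => intro _; rfl
  | succ k ih =>
    intro h
    simp only [traj, ih (fun i hi => h i (Nat.lt_succ_of_lt hi)),
      h k (Nat.lt_succ_self k)]

lemma traj_tail {S I : Type*} (f : S → I → S) (x : S) (u v : ℕ → I) (M : ℕ)
    (hM : traj f x u M = traj f x v M) (h : ∀ j, M ≤ j → u j = v j) :
    ∀ i, M ≤ i → traj f x u i = traj f x v i := by
  intro i hi
  induction i, hi using Nat.le_induction with
  | base => exact hM
  | succ k hk ih => simp only [traj, ih, h k hk]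

/-- Proposition 3(b): if the nominal optimizer is unique (e.g. under strict convexity),
then for `a = 0` the safety–stability set degenerates to the singleton `{v*(0)}`. -/
theorem sset_singleton_a_zero {n m : ℕ}
    (f : EuclideanSpace ℝ (Fin n) → EuclideanSpace ℝ (Fin m) → EuclideanSpace ℝ (Fin n))
    (X : Set (EuclideanSpace ℝ (Fin n))) (U : Set (EuclideanSpace ℝ (Fin m)))
    (Xf : Set (EuclideanSpace ℝ (Fin n)))
    (l : EuclideanSpace ℝ (Fin n) → EuclideanSpace ℝ (Fin m) → ℝ)
    (Vf : EuclideanSpace ℝ (Fin n) → ℝ)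
    (N M : ℕ) (x : EuclideanSpace ℝ (Fin n))
    (vs : ℕ → EuclideanSpace ℝ (Fin m)) (zs : ℕ → EuclideanSpace ℝ (Fin n))
    (hM1 : 1 ≤ M) (hMN : M ≤ N)
    (hopt : OptPair f X U Xf l Vf N x vs zs)
    (huniq : ∀ w, Feasible f X U Xf N x w →
      (∀ v', Feasible f X U Xf N x v' → mpcCost f l Vf N x w ≤ mpcCost f l Vf N x v') →
      ∀ i < N, w i = vs i) :
    S2Set f X U l 0 M x vs zs = {vs 0} ∧
    ∀ u, Adm f X U l 0 M x vs zs u → u 0 = vs 0 := by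
  have key : ∀ u, Adm f X U l 0 M x vs zs u → u 0 = vs 0 := by
    intro u hu
    obtain ⟨hufeas, hucost, huend⟩ := hu
    obtain ⟨⟨hvX, hvXf⟩, hz, hvopt⟩ := hopt
    set w : ℕ → EuclideanSpace ℝ (Fin m) := fun i => if i < M then u i else vs i with hw
    have hwlt : ∀ i ≤ M, traj f x w i = traj f x u i := by
      intro i hi
      apply traj_congr
      intro j hj
      simp [hw, lt_of_lt_of_le hj hi]
    have hwM : traj f x w M = traj f x vs M := by
      rw [hwlt M le_rfl, huend, hz M]
    have hwge : ∀ i, M ≤ i → traj f x w i = traj f x vs i :=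
      traj_tail f x w vs M hwM (fun j hj => by simp [hw, Nat.not_lt.mpr hj])
    have hwfeas : Feasible f X U Xf N x w := by
      constructor
      · intro i hi
        by_cases hiM : i < M
        · rw [hwlt i (le_of_lt hiM)]
          refine ⟨(hufeas i hiM).1, ?_⟩
          simpa [hw, hiM] using (hufeas i hiM).2
        · rw [hwge i (Nat.not_lt.mp hiM)]
          refine ⟨(hvX i hi).1, ?_⟩
          simpa [hw, hiM] using (hvX i hi).2
      · rw [hwge N hMN]; exact hvXf
    have hsum1 : ∑ i ∈ Finset.range N, l (traj f x w i) (w i)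
        = (∑ i ∈ Finset.range M, l (traj f x u i) (u i))
          + ∑ i ∈ Finset.Ico M N, l (traj f x vs i) (vs i) := by
      rw [Finset.range_eq_Ico, ← Finset.sum_Ico_consecutive _ (Nat.zero_le M) hMN,
        ← Finset.range_eq_Ico]
      congr 1
      · apply Finset.sum_congr rfl
        intro i hi
        rw [Finset.mem_range] at hi
        rw [hwlt i (le_of_lt hi)]
        simp [hw, hi]
      · apply Finset.sum_congr rfl
        intro i hi
        rw [Finset.mem_Ico] at hi
        rw [hwge i hi.1]
        simp [hw, Nat.not_lt.mpr hi.1]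
    have hsum2 : ∑ i ∈ Finset.range N, l (traj f x vs i) (vs i)
        = (∑ i ∈ Finset.range M, l (traj f x vs i) (vs i))
          + ∑ i ∈ Finset.Ico M N, l (traj f x vs i) (vs i) := by
      rw [Finset.range_eq_Ico, ← Finset.sum_Ico_consecutive _ (Nat.zero_le M) hMN,
        ← Finset.range_eq_Ico]
    have hcostle : mpcCost f l Vf N x w ≤ mpcCost f l Vf N x vs := by
      unfold mpcCost
      rw [hsum1, hsum2, hwge N hMN]
      have : (∑ i ∈ Finset.range M, l (traj f x u i) (u i))
          ≤ ∑ i ∈ Finset.range M, l (traj f x vs i) (vs i) := by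
        have h2 : ∑ i ∈ Finset.range M, l (zs i) (vs i)
            = ∑ i ∈ Finset.range M, l (traj f x vs i) (vs i) :=
          Finset.sum_congr rfl (fun i _ => by rw [hz i])
        nlinarith [hucost]
      linarith
    have hwmin : ∀ v', Feasible f X U Xf N x v' →
        mpcCost f l Vf N x w ≤ mpcCost f l Vf N x v' :=
      fun v' hv' => le_trans hcostle (hvopt v' hv')
    have h0 := huniq w hwfeas hwmin 0 (lt_of_lt_of_le hM1 hMN)
    rw [show w 0 = u 0 from if_pos hM1] at h0
    exact h0
  refine ⟨?_, key⟩
  ext y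
  simp only [S2Set, Set.mem_setOf_eq, Set.mem_singleton_iff]
  constructor
  · rintro ⟨u, hu, rfl⟩
    exact key u hu
  · rintro rfl
    refine ⟨vs, ⟨?_, ?_, ?_⟩, rfl⟩
    · intro i hi; exact hopt.1.1 i (lt_of_lt_of_le hi hMN)
    · have : ∑ i ∈ Finset.range M, l (zs i) (vs i)
          = ∑ i ∈ Finset.range M, l (traj f x vs i) (vs i) :=
        Finset.sum_congr rfl (fun i _ => by rw [hopt.2.1 i])
      rw [this]
      simp
    · exact (hopt.2.1 M).symm
end
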